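/- Consider an ALG-schedule and a reference time t ≥ 0. Let j ∈ Cl(t) and k ∈ N(t), and suppose (j,k) is an E_N-edge of the borrow graph. Then y_k(t) ≤ y_j(s_j). -/
import Mathlib


open MeasureTheory Set

open scoped Classical

noncomputable section

variable {J : Type*}

/-- Total work done on job `j` by time `u` under the schedule `σ`. -/
def workDone (σ : ℝ → J → ℝ) (j : J) (u : ℝ) : ℝ := ∫ v in (0:ℝ)..u, σ v j

/-- Remaining processing time of job `j` at time `u`. -/
def remT (p : J → ℝ) (σ : ℝ → J → ℝ) (j : J) (u : ℝ) : ℝ := p j - workDone σ j u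

/-- Completion time of job `j`: the least `u` with `workDone σ j u = p j`,
    and `⊤` if the job never completes. -/
def cTime (p : J → ℝ) (σ : ℝ → J → ℝ) (j : J) : EReal :=
  sInf ((fun v : ℝ => (v : EReal)) '' {v : ℝ | workDone σ j v = p j})

/-- Job `j` is available at time `u`: released and not yet completed. -/
def availAt (r p : J → ℝ) (σ : ℝ → J → ℝ) (u : ℝ) (j : J) : Prop :=
  r j ≤ u ∧ (u : EReal) < cTime p σ j

/-- Job `j` is processed at time `u`. -/
def procAt (σ : ℝ → J → ℝ) (u : ℝ) (j : J) : Prop := 0 < σ u j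

/-- Job `j` is non-clairvoyant at time `u`. -/
def ncAt (r p : J → ℝ) (α : ℝ) (σ : ℝ → J → ℝ) (u : ℝ) (j : J) : Prop :=
  availAt r p σ u j ∧ workDone σ j u ≤ α * p j

/-- Job `j` is clairvoyant at time `u`. -/
def clAt (r p : J → ℝ) (α : ℝ) (σ : ℝ → J → ℝ) (u : ℝ) (j : J) : Prop :=
  availAt r p σ u j ∧ α * p j < workDone σ j u

/-- The time at which job `j` emits its signal: the least `u` with
    `workDone σ j u = α * p j`. -/
def emitT (p : J → ℝ) (α : ℝ) (σ : ℝ → J → ℝ) (j : J) : ℝ :=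
  sInf {u : ℝ | workDone σ j u = α * p j}

/-- Data of an instance: nonnegative release dates, positive processing times
    and `α ∈ (0,1)`. -/
structure IsInstance (r p : J → ℝ) (α : ℝ) : Prop where
  r_nonneg : ∀ j, 0 ≤ r j
  p_pos : ∀ j, 0 < p j
  alpha_mem : α ∈ Set.Ioo (0 : ℝ) 1

/-- `σ` is a (feasible, preemptive, single machine) schedule. -/
structure IsSchedule [Fintype J] (r p : J → ℝ) (σ : ℝ → J → ℝ) : Prop where
  meas : ∀ j, Measurable fun u => σ u j
  nonneg : ∀ u j, 0 ≤ σ u j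
  sum_le_one : ∀ u, ∑ j, σ u j ≤ 1
  zero_before_release : ∀ u j, u < r j → σ u j = 0
  workDone_le : ∀ u j, workDone σ j u ≤ p j

/-- A schedule is non-idling if it uses the full machine capacity whenever
    some job is available. -/
def NonIdling [Fintype J] (r p : J → ℝ) (σ : ℝ → J → ℝ) : Prop :=
  ∀ u, (∃ j, availAt r p σ u j) → ∑ j, σ u j = 1

/-- The SRPT condition at time `u`: `Cl(u) ≠ ∅` and
    `min_{j ∈ Cl(u)} p_j(u) ≤ ((1-α)/α) · min_{j ∈ N(u)} y_j(u)`
    (the minimum over the empty set being `+∞`). -/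
def SrptCond (r p : J → ℝ) (α : ℝ) (σ : ℝ → J → ℝ) (u : ℝ) : Prop :=
  ∃ k, clAt r p α σ u k ∧
    ∀ j, ncAt r p α σ u j → remT p σ k u ≤ ((1 - α) / α) * workDone σ j u

/-- `k` is a clairvoyant job of minimal remaining processing time at `u`,
    emitting last among those. -/
def IsSrptChoice (r p : J → ℝ) (α : ℝ) (σ : ℝ → J → ℝ) (u : ℝ) (k : J) : Prop :=
  clAt r p α σ u k ∧
    (∀ j, clAt r p α σ u j → remT p σ k u ≤ remT p σ j u) ∧
    (∀ j, clAt r p α σ u j → remT p σ j u = remT p σ k u →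
      emitT p α σ j ≤ emitT p α σ k)

/-- `j` is a non-clairvoyant job with minimal progress at time `u`. -/
def IsMinNc (r p : J → ℝ) (α : ℝ) (σ : ℝ → J → ℝ) (u : ℝ) (j : J) : Prop :=
  ncAt r p α σ u j ∧ ∀ j', ncAt r p α σ u j' → workDone σ j u ≤ workDone σ j' u

/-- `σ` is an ALG-schedule: non-idling, and at any time with available jobs it
    either runs a single clairvoyant job of shortest remaining processing time
    (breaking ties by latest emission) when the SRPT condition holds, or it runs
    exactly the non-clairvoyant jobs of minimal progress at equal rates. -/
structure IsALG [Fintype J] (r p : J → ℝ) (α : ℝ) (σ : ℝ → J → ℝ) : Prop where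
  sched : IsSchedule r p σ
  nonidling : NonIdling r p σ
  srpt_branch : ∀ u, (∃ j, availAt r p σ u j) → SrptCond r p α σ u →
    ∃ k, IsSrptChoice r p α σ u k ∧ ∀ j, j ≠ k → σ u j = 0
  setf_branch : ∀ u, (∃ j, availAt r p σ u j) → ¬ SrptCond r p α σ u →
    (∀ j, procAt σ u j → IsMinNc r p α σ u j) ∧
    (∀ j j', IsMinNc r p α σ u j → IsMinNc r p α σ u j' → σ u j = σ u j')

/-- Right endpoint `min (C_j, t)` of the lifetime of `j` w.r.t. reference time `t`. -/
def lifeEnd (p : J → ℝ) (σ : ℝ → J → ℝ) (t : ℝ) (j : J) : ℝ :=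
  (min (cTime p σ j) (t : EReal)).toReal

/-- The lifetime `I_j = [r j, min (C_j, t)]` of job `j`. -/
def lifetime (r p : J → ℝ) (σ : ℝ → J → ℝ) (t : ℝ) (j : J) : Set ℝ :=
  Set.Icc (r j) (lifeEnd p σ t j)

/-- `E_N`-edge of the borrow graph: `i` is processed at some time of `I_j`
    while being non-clairvoyant. -/
def ENedge (r p : J → ℝ) (α : ℝ) (σ : ℝ → J → ℝ) (t : ℝ) (j i : J) : Prop :=
  ∃ u ∈ lifetime r p σ t j, procAt σ u i ∧ ncAt r p α σ u i

/-- `E_C`-edge of the borrow graph: `i` is processed at some time of `I_j`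
    while being clairvoyant. -/
def ECedge (r p : J → ℝ) (α : ℝ) (σ : ℝ → J → ℝ) (t : ℝ) (j i : J) : Prop :=
  ∃ u ∈ lifetime r p σ t j, procAt σ u i ∧ clAt r p α σ u i

/-- Edge of the borrow graph `G_B`. -/
def borrowEdge (r p : J → ℝ) (α : ℝ) (σ : ℝ → J → ℝ) (t : ℝ) (j i : J) : Prop :=
  ENedge r p α σ t j i ∨ ECedge r p α σ t j i

/-- `reaches j i` iff `i ∈ R_j`, i.e. `i` is reachable from `j` in the borrow
    graph (`j` itself included). -/
def reaches (r p : J → ℝ) (α : ℝ) (σ : ℝ → J → ℝ) (t : ℝ) : J → J → Prop :=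
  Relation.ReflTransGen (borrowEdge r p α σ t)

/-- Truncated progress `ȳ_j = min (y_j(t), α p_j)`. -/
def truncY (p : J → ℝ) (α : ℝ) (σ : ℝ → J → ℝ) (t : ℝ) (j : J) : ℝ :=
  min (workDone σ j t) (α * p j)

end


section helpers

open MeasureTheory

variable {J : Type*} [Fintype J] {r p : J → ℝ} {α : ℝ} {σ : ℝ → J → ℝ}

lemma sigma_le_one' (hs : IsSchedule r p σ) (u : ℝ) (j : J) : σ u j ≤ 1 :=
  le_trans (Finset.single_le_sum (fun i _ => hs.nonneg u i) (Finset.mem_univ j))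
    (hs.sum_le_one u)

lemma intInt' (hs : IsSchedule r p σ) (j : J) (a b : ℝ) :
    IntervalIntegrable (fun u => σ u j) MeasureTheory.volume a b := by
  refine IntervalIntegrable.mono_fun' (g := fun _ => (1:ℝ)) intervalIntegrable_const
    ((hs.meas j).aestronglyMeasurable) ?_
  filter_upwards with x
  rw [Real.norm_eq_abs, abs_of_nonneg (hs.nonneg x j)]
  exact sigma_le_one' hs x j

lemma wd_cont (hs : IsSchedule r p σ) (j : J) : Continuous (workDone σ j) :=
  intervalIntegral.continuous_primitive (fun a b => intInt' hs j a b) 0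

lemma wd_mono (hs : IsSchedule r p σ) (j : J) {a b : ℝ} (hab : a ≤ b) :
    workDone σ j a ≤ workDone σ j b := by
  have h := intervalIntegral.integral_add_adjacent_intervals
    (intInt' hs j 0 a) (intInt' hs j a b)
  have h2 : 0 ≤ ∫ v in a..b, σ v j :=
    intervalIntegral.integral_nonneg hab (fun u _ => hs.nonneg u j)
  simp only [workDone]
  linarith

lemma emit_eq (hinst : IsInstance r p α) (hs : IsSchedule r p σ) {t : ℝ} (ht : 0 ≤ t)
    {j : J} (hcl : α * p j < workDone σ j t) :
    workDone σ j (emitT p α σ j) = α * p j := by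
  have cont := wd_cont hs j
  have hαp : 0 < α * p j := mul_pos hinst.alpha_mem.1 (hinst.p_pos j)
  have h0 : workDone σ j 0 = 0 := by simp [workDone]
  have hne : {u : ℝ | workDone σ j u = α * p j}.Nonempty := by
    have him := intermediate_value_Icc ht cont.continuousOn
    have hmem : α * p j ∈ Set.Icc (workDone σ j 0) (workDone σ j t) :=
      ⟨by rw [h0]; exact hαp.le, hcl.le⟩
    obtain ⟨u, _, hu⟩ := him hmem
    exact ⟨u, hu⟩
  have hbdd : BddBelow {u : ℝ | workDone σ j u = α * p j} := by
    refine ⟨0, fun u hu => ?_⟩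
    by_contra h
    push_neg at h
    have hle : workDone σ j u ≤ 0 := by
      rw [workDone, intervalIntegral.integral_symm]
      have : 0 ≤ ∫ v in u..(0:ℝ), σ v j :=
        intervalIntegral.integral_nonneg h.le (fun x _ => hs.nonneg x j)
      linarith
    have : workDone σ j u = α * p j := hu
    linarith
  have hcls : IsClosed {u : ℝ | workDone σ j u = α * p j} :=
    isClosed_eq cont continuous_const
  exact hcls.csInf_mem hne hbdd

lemma key_bound (hinst : IsInstance r p α) (halg : IsALG r p α σ) {t : ℝ}
    {j k : J} (hj : clAt r p α σ t j) {w : ℝ} (hrj : r j ≤ w) (hwt : w ≤ t)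
    (hproc : procAt σ w k) (hknc : ncAt r p α σ w k) :
    workDone σ k w ≤ α * p j := by
  have hex : ∃ i, availAt r p σ w i := ⟨k, hknc.1⟩
  have hjav : availAt r p σ w j :=
    ⟨hrj, lt_of_le_of_lt (EReal.coe_le_coe_iff.mpr hwt) hj.1.2⟩
  have hnS : ¬ SrptCond r p α σ w := by
    intro hS
    obtain ⟨k', hk', hz⟩ := halg.srpt_branch w hex hS
    have hkk : k = k' := by
      by_contra hne
      exact absurd (hz k hne) (ne_of_gt hproc)
    have hcl' := hk'.1.2
    rw [← hkk] at hcl'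
    linarith [hknc.2]
  obtain ⟨hmin, -⟩ := halg.setf_branch w hex hnS
  have hmk := hmin k hproc
  rcases le_or_gt (workDone σ j w) (α * p j) with hle | hlt
  · exact le_trans (hmk.2 j ⟨hjav, hle⟩) hle
  · have hjcl : clAt r p α σ w j := ⟨hjav, hlt⟩
    unfold SrptCond at hnS
    push_neg at hnS
    obtain ⟨m, hm, hmlt⟩ := hnS j hjcl
    have hkm : workDone σ k w ≤ workDone σ m w := hmk.2 m hm
    have hα0 := hinst.alpha_mem.1
    have hα1 := hinst.alpha_mem.2
    have hβ : (1 - α) / α * α = 1 - α := div_mul_cancel₀ _ (ne_of_gt hα0)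
    have hrem : remT p σ j w < (1 - α) * p j := by
      unfold remT; nlinarith [hjcl.2]
    have hβnn : 0 ≤ (1 - α) / α := div_nonneg (by linarith) hα0.le
    have h2 : (1 - α) / α * workDone σ k w < (1 - α) * p j :=
      calc (1 - α) / α * workDone σ k w ≤ (1 - α) / α * workDone σ m w :=
            mul_le_mul_of_nonneg_left hkm hβnn
        _ < remT p σ j w := hmlt
        _ < (1 - α) * p j := hrem
    have h4 := mul_lt_mul_of_pos_right h2 hα0
    rw [mul_right_comm, hβ] at h4
    -- h4 : (1 - α) * workDone σ k w < (1 - α) * p j * α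
    nlinarith [h4]

end helpers

/-- If `j ∈ Cl(t)`, `k ∈ N(t)` and `(j,k)` is an `E_N`-edge
of the borrow graph, then `y_k(t) ≤ y_j(s_j)`. -/
theorem stmt13 {J : Type*} [Fintype J] {r p : J → ℝ} {α : ℝ} {σ : ℝ → J → ℝ}
    (hinst : IsInstance r p α) (halg : IsALG r p α σ) (t : ℝ) (ht : 0 ≤ t)
    (j k : J) (hj : clAt r p α σ t j) (hk : ncAt r p α σ t k)
    (he : ENedge r p α σ t j k) :
    workDone σ k t ≤ workDone σ j (emitT p α σ j) := by
  have hs := halg.sched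
  rw [emit_eq hinst hs ht hj.2]
  have hlife : lifeEnd p σ t j = t := by
    unfold lifeEnd
    rw [min_eq_right (le_of_lt hj.1.2), EReal.toReal_coe]
  obtain ⟨u, hu, hpu, hnu⟩ := he
  rw [lifetime, hlife] at hu
  by_contra hcon
  push_neg at hcon
  set S : Set ℝ := {w | w ≤ t ∧ workDone σ k w ≤ α * p j} with hS
  have huS : u ∈ S := ⟨hu.2, key_bound hinst halg hj hu.1 hu.2 hpu hnu⟩
  have hSne : S.Nonempty := ⟨u, huS⟩
  have hSbdd : BddAbove S := ⟨t, fun w hw => hw.1⟩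
  set v := sSup S with hv
  have hvt : v ≤ t := csSup_le hSne (fun w hw => hw.1)
  have huv : u ≤ v := le_csSup hSbdd huS
  have hvle : workDone σ k v ≤ α * p j := by
    have hsub : S ⊆ {w | workDone σ k w ≤ α * p j} := fun w hw => hw.2
    have hcl' : IsClosed {w | workDone σ k w ≤ α * p j} :=
      isClosed_le (wd_cont hs k) continuous_const
    exact (hcl'.closure_subset_iff.mpr hsub) (csSup_mem_closure hSne hSbdd)
  have hvlt : v < t := lt_of_le_of_ne hvt (fun h => by rw [h] at hvle; linarith)
  obtain ⟨w, hwIoc, hwproc⟩ : ∃ w ∈ Set.Ioc v t, 0 < σ w k := by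
    by_contra h
    push_neg at h
    have hz : Set.EqOn (fun x => σ x k) (fun _ => (0:ℝ)) (Set.Ioc v t) :=
      fun w hw => le_antisymm (h w hw) (hs.nonneg w k)
    have hint : ∫ x in v..t, σ x k = 0 := by
      rw [intervalIntegral.integral_of_le hvt,
        MeasureTheory.setIntegral_congr_fun measurableSet_Ioc hz]
      simp
    have hadd := intervalIntegral.integral_add_adjacent_intervals
      (intInt' hs k 0 v) (intInt' hs k v t)
    have heq : workDone σ k t = workDone σ k v := by
      simp only [workDone] at *
      linarith
    linarith
  have hwS : w ∉ S := fun hwin => absurd (le_csSup hSbdd hwin) (not_le.mpr hwIoc.1)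
  have hwgt : α * p j < workDone σ k w := by
    by_contra h; push_neg at h; exact hwS ⟨hwIoc.2, h⟩
  have hrkw : r k ≤ w := by
    by_contra h; push_neg at h
    exact absurd (hs.zero_before_release w k h) (ne_of_gt hwproc)
  have hknc2 : ncAt r p α σ w k :=
    ⟨⟨hrkw, lt_of_le_of_lt (EReal.coe_le_coe_iff.mpr hwIoc.2) hk.1.2⟩,
      le_trans (wd_mono hs k hwIoc.2) hk.2⟩
  have hkey := key_bound hinst halg hj (le_trans hu.1 (le_trans huv hwIoc.1.le))
    hwIoc.2 hwproc hknc2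
  linarith
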